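/- arXiv:1707.09710 — 3 statements merged into one kernel-verified Lean document; each statement's English description precedes it below -/
import Mathlib

section
/- Let n ≥ 1 and A ≥ 0. There exists a constant C > 0 (depending only on n and A) such that for all k, m ∈ ℤⁿ, ((1+|k|)^A + (1+|m|)^A) · |k − m| ≤ C · |(1+|k|)^A k − (1+|m|)^A m|. -/
noncomputable def toE {n : ℕ} (k : Fin n → ℤ) : EuclideanSpace ℝ (Fin n) := WithLp.toLp 2 (fun i => (k i : ℝ))

open RealInnerProductSpace in
lemma key_ineq {E : Type*} [NormedAddCommGroup E] [InnerProductSpace ℝ E] (A : ℝ) (hA : 0 ≤ A)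
    (x y : E) (h : ‖y‖ ≤ ‖x‖) :
    ((1 + ‖x‖) ^ A + (1 + ‖y‖) ^ A) * ‖x - y‖
      ≤ (6 * 2 ^ A) * ‖(1 + ‖x‖) ^ A • x - (1 + ‖y‖) ^ A • y‖ := by
  set a := (1 + ‖x‖) ^ A with ha
  set b := (1 + ‖y‖) ^ A with hb
  have hx0 : (0:ℝ) ≤ ‖x‖ := norm_nonneg x
  have hy0 : (0:ℝ) ≤ ‖y‖ := norm_nonneg y
  have h1y : (0:ℝ) < 1 + ‖y‖ := by linarith
  have h1x : (0:ℝ) < 1 + ‖x‖ := by linarith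
  have hb1 : (1:ℝ) ≤ b := Real.one_le_rpow (by linarith) hA
  have ha1 : (1:ℝ) ≤ a := Real.one_le_rpow (by linarith) hA
  have hba : b ≤ a := Real.rpow_le_rpow (le_of_lt h1y) (by linarith) hA
  have h2A : (1:ℝ) ≤ 2 ^ A := Real.one_le_rpow one_le_two hA
  have hfn : 0 ≤ ‖a • x - b • y‖ := norm_nonneg _
  rcases le_or_gt ‖x‖ (2 * ‖y‖) with hc | hc
  · -- case 1 : comparable norms
    have hab : a ≤ 2 ^ A * b := by
      rw [ha, hb, ← Real.mul_rpow (by norm_num) (le_of_lt h1y)]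
      exact Real.rpow_le_rpow (le_of_lt h1x) (by linarith) hA
    have key2 : b * ‖x - y‖ ≤ ‖a • x - b • y‖ := by
      rcases eq_or_ne x y with rfl | hne
      · simp
      have hpos : 0 < ‖x - y‖ := by
        rw [norm_pos_iff]; exact sub_ne_zero.mpr hne
      have hI : ⟪x, y⟫ ≤ ‖x‖ * ‖y‖ := real_inner_le_norm x y
      have e1 : ⟪a • x - b • y, x - y⟫ =
          a * ‖x‖ ^ 2 - (a + b) * ⟪x, y⟫ + b * ‖y‖ ^ 2 := by
        simp only [inner_sub_left, inner_sub_right, real_inner_smul_left,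
          real_inner_self_eq_norm_sq, real_inner_comm y x]
        ring
      have hinner : b * ‖x - y‖ ^ 2 ≤ ⟪a • x - b • y, x - y⟫ := by
        rw [e1, norm_sub_sq_real]
        nlinarith [mul_nonneg (sub_nonneg.mpr hba) (mul_nonneg hx0 (sub_nonneg.mpr h))]
      have hcs : ⟪a • x - b • y, x - y⟫ ≤ ‖a • x - b • y‖ * ‖x - y‖ :=
        real_inner_le_norm _ _
      have : b * ‖x - y‖ * ‖x - y‖ ≤ ‖a • x - b • y‖ * ‖x - y‖ := by nlinarith
      exact le_of_mul_le_mul_right this hpos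
    have hxy0 : 0 ≤ ‖x - y‖ := norm_nonneg _
    nlinarith [mul_le_mul_of_nonneg_right hab hxy0, mul_nonneg (sub_nonneg.mpr hb1) hxy0,
      mul_le_mul_of_nonneg_left key2 (le_trans zero_le_one h2A)]
  · -- case 2 : ‖x‖ > 2‖y‖
    have hby : b * ‖y‖ ≤ a * ‖x‖ / 2 := by nlinarith
    have hnx : ‖a • x‖ = a * ‖x‖ := by
      rw [norm_smul, Real.norm_eq_abs, abs_of_nonneg (by linarith)]
    have hny : ‖b • y‖ = b * ‖y‖ := by
      rw [norm_smul, Real.norm_eq_abs, abs_of_nonneg (by linarith)]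
    have hlow : a * ‖x‖ / 2 ≤ ‖a • x - b • y‖ := by
      have := norm_sub_norm_le (a • x) (b • y)
      rw [hnx, hny] at this
      linarith
    have htri : ‖x - y‖ ≤ ‖x‖ + ‖y‖ := norm_sub_le x y
    have : ((1 + ‖x‖) ^ A + (1 + ‖y‖) ^ A) * ‖x - y‖ ≤ 6 * ‖a • x - b • y‖ := by
      rw [← ha, ← hb]
      nlinarith [norm_nonneg (x - y), mul_le_mul_of_nonneg_right hba (norm_nonneg (x - y)),
        mul_le_mul_of_nonneg_left htri (by linarith : (0:ℝ) ≤ a)]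
    nlinarith

theorem stmt0 (n : ℕ) (hn : 1 ≤ n) (A : ℝ) (hA : 0 ≤ A) :
    ∃ C > (0 : ℝ), ∀ k m : Fin n → ℤ,
      ((1 + ‖toE k‖) ^ A + (1 + ‖toE m‖) ^ A) * ‖toE k - toE m‖
        ≤ C * ‖(1 + ‖toE k‖) ^ A • toE k - (1 + ‖toE m‖) ^ A • toE m‖ := by
  refine ⟨6 * 2 ^ A, by positivity, fun k m => ?_⟩
  rcases le_total ‖toE m‖ ‖toE k‖ with h | h
  · exact key_ineq A hA (toE k) (toE m) h
  · have := key_ineq A hA (toE m) (toE k) h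
    rw [norm_sub_rev (toE m), norm_sub_rev ((1 + ‖toE m‖) ^ A • toE m)] at this
    linarith
end

section
/- Let A ≥ 0 and C₁ > 0. There exists C₂ > 0 such that for all k, ℓ, m ∈ ℤⁿ: if |(1+|k|)^A k − (1+|m|)^A (ℓ + m)| ≤ C₁ ((1+|k|)^A + (1+|m|)^A), then |k − m| ≤ C₂ (1 + |ℓ|). -/
open scoped RealInnerProductSpace

lemma aux1 {E : Type*} [NormedAddCommGroup E] [InnerProductSpace ℝ E]
    (x y : E) (a b : ℝ) (hb : 0 ≤ b) (hab : b ≤ a) (hxy : ‖y‖ ≤ ‖x‖) :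
    b * ‖x - y‖ ≤ ‖a • x - b • y‖ := by
  have hip : ⟪x, y⟫ ≤ ‖x‖ * ‖y‖ := real_inner_le_norm x y
  have ha : 0 ≤ a := hb.trans hab
  have h1 : ‖a • x - b • y‖ ^ 2 = a^2 * ‖x‖^2 - 2*(a*b)*⟪x,y⟫ + b^2*‖y‖^2 := by
    rw [norm_sub_sq_real]
    simp only [norm_smul, Real.norm_eq_abs, real_inner_smul_left, real_inner_smul_right,
      abs_of_nonneg hb, abs_of_nonneg ha, mul_pow]
    ring
  have h2 : ‖x - y‖ ^ 2 = ‖x‖^2 - 2*⟪x,y⟫ + ‖y‖^2 := norm_sub_sq_real x y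
  have h3 : ⟪x,y⟫ ≤ ‖x‖^2 := by nlinarith [norm_nonneg x, norm_nonneg y]
  have hsq : (b * ‖x - y‖)^2 ≤ ‖a • x - b • y‖^2 := by
    nlinarith [mul_nonneg (mul_nonneg (sub_nonneg.2 hab) hb) (sub_nonneg.2 h3),
      sq_nonneg ((a-b)*‖x‖)]
  calc b * ‖x - y‖ = Real.sqrt ((b * ‖x - y‖)^2) := (Real.sqrt_sq (by positivity)).symm
    _ ≤ Real.sqrt (‖a • x - b • y‖^2) := Real.sqrt_le_sqrt hsq
    _ = ‖a • x - b • y‖ := Real.sqrt_sq (norm_nonneg _)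

lemma key_wlog {E : Type*} [NormedAddCommGroup E] [InnerProductSpace ℝ E]
    (A : ℝ) (hA : 0 ≤ A) (x y : E) (hxy : ‖y‖ ≤ ‖x‖) :
    (2:ℝ)^(-A)/6 * ((1+‖x‖)^A + (1+‖y‖)^A) * ‖x - y‖
      ≤ ‖(1+‖x‖)^A • x - (1+‖y‖)^A • y‖ := by
  set r := ‖x‖ with hr
  set s := ‖y‖ with hs
  have hs0 : 0 ≤ s := norm_nonneg y
  have hr0 : 0 ≤ r := norm_nonneg x
  have hb1 : (1:ℝ) ≤ (1+s)^A := Real.one_le_rpow (by linarith) hA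
  have hab : (1+s)^A ≤ (1+r)^A := Real.rpow_le_rpow (by linarith) (by linarith) hA
  have ha1 : (1:ℝ) ≤ (1+r)^A := hb1.trans hab
  have hcle1 : (2:ℝ)^(-A) ≤ 1 := by
    have := Real.rpow_le_rpow_of_exponent_le (by norm_num : (1:ℝ) ≤ 2) (by linarith : -A ≤ 0)
    simpa using this
  have hc0 : (0:ℝ) < (2:ℝ)^(-A) := Real.rpow_pos_of_pos (by norm_num) _
  rcases le_or_gt s (r/2) with hcase | hcase
  · -- far case: s ≤ r/2
    have hnorm : ‖x - y‖ ≤ r + s := norm_sub_le x y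
    have hlow : (1+r)^A * r - (1+s)^A * s ≤ ‖(1+r)^A • x - (1+s)^A • y‖ := by
      have := norm_sub_norm_le ((1+r)^A • x) ((1+s)^A • y)
      simpa [norm_smul, Real.norm_eq_abs, abs_of_nonneg (le_trans zero_le_one hb1),
        abs_of_nonneg (le_trans zero_le_one ha1), hr, hs,
        abs_of_nonneg (by positivity : (0:ℝ) ≤ (1 + ‖x‖)^A),
        abs_of_nonneg (by positivity : (0:ℝ) ≤ (1 + ‖y‖)^A)] using this
    have hbs : (1+s)^A * s ≤ (1+r)^A * (r/2) :=
      mul_le_mul hab hcase hs0 (by linarith)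
    have hN : ‖x - y‖ ≤ 3*r/2 := by linarith
    have h4 : (2:ℝ)^(-A)/6 * ((1+r)^A + (1+s)^A) ≤ (1+r)^A/3 := by
      nlinarith [mul_nonneg (sub_nonneg.2 hcle1)
        (by linarith : (0:ℝ) ≤ (1+r)^A + (1+s)^A), hc0]
    have h5 := mul_le_mul h4 hN (norm_nonneg _) (by linarith : (0:ℝ) ≤ (1+r)^A/3)
    nlinarith [h5, hlow, hbs]
  · -- near case: r/2 < s
    have hb2 : (2:ℝ)^(-A) * (1+r)^A ≤ (1+s)^A := by
      have h1 : (2:ℝ)^(-A) * (1+r)^A = ((1+r)/2)^A := by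
        rw [Real.rpow_neg (by norm_num), Real.div_rpow (by linarith) (by norm_num)]
        ring
      rw [h1]
      exact Real.rpow_le_rpow (by linarith) (by linarith) hA
    have hmain : (1+s)^A * ‖x - y‖ ≤ ‖(1+r)^A • x - (1+s)^A • y‖ :=
      aux1 x y _ _ (le_trans zero_le_one hb1) hab hxy
    nlinarith [norm_nonneg (x - y),
      mul_le_mul_of_nonneg_right hb2 (norm_nonneg (x - y)),
      mul_le_mul_of_nonneg_right hab (norm_nonneg (x - y))]

lemma key {E : Type*} [NormedAddCommGroup E] [InnerProductSpace ℝ E]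
    (A : ℝ) (hA : 0 ≤ A) (x y : E) :
    (2:ℝ)^(-A)/6 * ((1+‖x‖)^A + (1+‖y‖)^A) * ‖x - y‖
      ≤ ‖(1+‖x‖)^A • x - (1+‖y‖)^A • y‖ := by
  rcases le_total ‖y‖ ‖x‖ with h | h
  · exact key_wlog A hA x y h
  · have := key_wlog A hA y x h
    calc (2:ℝ)^(-A)/6 * ((1+‖x‖)^A + (1+‖y‖)^A) * ‖x - y‖
        = (2:ℝ)^(-A)/6 * ((1+‖y‖)^A + (1+‖x‖)^A) * ‖y - x‖ := by
          rw [norm_sub_rev]; ring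
      _ ≤ ‖(1+‖y‖)^A • y - (1+‖x‖)^A • x‖ := this
      _ = ‖(1+‖x‖)^A • x - (1+‖y‖)^A • y‖ := norm_sub_rev _ _

theorem stmt6 (n : ℕ) (A C₁ : ℝ) (hA : 0 ≤ A) (hC₁ : 0 < C₁) :
    ∃ C₂ > (0 : ℝ), ∀ k ℓ m : Fin n → ℤ,
      ‖(1 + ‖toE k‖) ^ A • toE k - (1 + ‖toE m‖) ^ A • (toE ℓ + toE m)‖
          ≤ C₁ * ((1 + ‖toE k‖) ^ A + (1 + ‖toE m‖) ^ A) →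
      ‖toE k - toE m‖ ≤ C₂ * (1 + ‖toE ℓ‖) := by
  have h2A : (0:ℝ) < (2:ℝ)^A := Real.rpow_pos_of_pos (by norm_num) _
  refine ⟨6 * (2:ℝ)^A * (C₁ + 1), by positivity, ?_⟩
  intro k ℓ m h
  set x := toE k
  set z := toE ℓ
  set y := toE m
  set a := (1 + ‖x‖)^A with ha
  set b := (1 + ‖y‖)^A with hb
  have ha1 : (1:ℝ) ≤ a := Real.one_le_rpow (by linarith [norm_nonneg x]) hA
  have hb1 : (1:ℝ) ≤ b := Real.one_le_rpow (by linarith [norm_nonneg y]) hA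
  have hub : ‖a • x - b • y‖ ≤ C₁ * (a + b) + b * ‖z‖ := by
    have hid : a • x - b • y = (a • x - b • (z + y)) + b • z := by
      rw [smul_add]; abel
    calc ‖a • x - b • y‖ = ‖(a • x - b • (z + y)) + b • z‖ := by rw [hid]
      _ ≤ ‖a • x - b • (z + y)‖ + ‖b • z‖ := norm_add_le _ _
      _ ≤ C₁ * (a + b) + b * ‖z‖ := by
          rw [norm_smul, Real.norm_eq_abs, abs_of_nonneg (by linarith : (0:ℝ) ≤ b)]
          exact add_le_add_left h _
  have hkey := key A hA x y
  rw [← ha, ← hb] at hkey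
  have hcinv : (2:ℝ)^(-A) * (2:ℝ)^A = 1 := by
    rw [← Real.rpow_add (by norm_num)]; simp
  have hc0 : (0:ℝ) < (2:ℝ)^(-A) := Real.rpow_pos_of_pos (by norm_num) _
  have hz0 : (0:ℝ) ≤ ‖z‖ := norm_nonneg z
  -- combine
  have hcomb : (2:ℝ)^(-A)/6 * (a + b) * ‖x - y‖ ≤ (C₁ + 1) * (a + b) * (1 + ‖z‖) := by
    have h1 : C₁ * (a + b) + b * ‖z‖ ≤ (C₁ + 1) * (a + b) * (1 + ‖z‖) := by
      nlinarith [mul_nonneg (le_of_lt hC₁) hz0]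
    linarith [hkey.trans hub]
  have hab0 : (0:ℝ) < a + b := by linarith
  have h2 : (2:ℝ)^(-A)/6 * ‖x - y‖ ≤ (C₁ + 1) * (1 + ‖z‖) := by
    have h3 : ((2:ℝ)^(-A)/6 * ‖x - y‖) * (a+b) ≤ ((C₁ + 1) * (1 + ‖z‖)) * (a+b) := by
      linear_combination hcomb
    exact le_of_mul_le_mul_right h3 hab0
  nlinarith [mul_le_mul_of_nonneg_left h2 (le_of_lt h2A), hcinv, norm_nonneg (x - y)]
end

section
/- Let A ≥ 0, C > 0, and for k ∈ ℤⁿ set B_k = {ξ ∈ ℝⁿ : |ξ − (1+|k|)^A k| ≤ C(1+|k|)^A}. Suppose k, ℓ ∈ ℤⁿ satisfy B_k ∩ B_ℓ ≠ ∅. Then there exists a constant C'' > 0 depending only on A and C such that |k − ℓ| ≤ C'' and B_k ⊂ {ξ ∈ ℝⁿ : |ξ − (1+|ℓ|)^A ℓ| ≤ C''(1+|ℓ|)^A}. -/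
open scoped RealInnerProductSpace


set_option maxHeartbeats 1000000 in
theorem stmt13 (n : ℕ) (A C : ℝ) (hA : 0 ≤ A) (hC : 0 < C) :
    ∃ C'' > (0 : ℝ), ∀ k ℓ : Fin n → ℤ,
      (Metric.closedBall ((1 + ‖toE k‖) ^ A • toE k) (C * (1 + ‖toE k‖) ^ A) ∩
        Metric.closedBall ((1 + ‖toE ℓ‖) ^ A • toE ℓ) (C * (1 + ‖toE ℓ‖) ^ A)).Nonempty →
      ‖toE k - toE ℓ‖ ≤ C'' ∧
      Metric.closedBall ((1 + ‖toE k‖) ^ A • toE k) (C * (1 + ‖toE k‖) ^ A) ⊆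
        {ξ : EuclideanSpace ℝ (Fin n) | ‖ξ - (1 + ‖toE ℓ‖) ^ A • toE ℓ‖ ≤ C'' * (1 + ‖toE ℓ‖) ^ A} := by
  have h1le : (1:ℝ) ≤ (1 + 2*C) ^ A := Real.one_le_rpow (by linarith) hA
  refine ⟨3*C*(1+2*C)^A, by positivity, ?_⟩
  rintro k ℓ ⟨ξ₀, h1, h2⟩
  set x := toE k with hx
  set y := toE ℓ with hy
  clear_value x y
  set a : ℝ := 1 + ‖x‖ with ha
  set b : ℝ := 1 + ‖y‖ with hb
  have hxn : 0 ≤ ‖x‖ := norm_nonneg _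
  have hyn : 0 ≤ ‖y‖ := norm_nonneg _
  have ha1 : (1:ℝ) ≤ a := le_add_of_nonneg_right hxn
  have hb1 : (1:ℝ) ≤ b := le_add_of_nonneg_right hyn
  have haA : 0 < a ^ A := Real.rpow_pos_of_pos (by linarith) A
  have hbA : 0 < b ^ A := Real.rpow_pos_of_pos (by linarith) A
  -- distance between centers
  have hd : ‖a ^ A • x - b ^ A • y‖ ≤ C * a ^ A + C * b ^ A := by
    rw [Metric.mem_closedBall] at h1 h2
    calc ‖a ^ A • x - b ^ A • y‖ ≤ dist (a ^ A • x) ξ₀ + dist ξ₀ (b ^ A • y) := by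
          rw [← dist_eq_norm]; exact dist_triangle _ _ _
      _ ≤ C * a ^ A + C * b ^ A := by
          rw [dist_comm (a ^ A • x) ξ₀]; exact add_le_add h1 h2
  -- key lower bound
  have hinner : ⟪a ^ A • x - b ^ A • y, x - y⟫ = a ^ A * ‖x‖^2 + b ^ A * ‖y‖^2 - (a ^ A + b ^ A) * ⟪x, y⟫ := by
    rw [inner_sub_left, real_inner_smul_left, real_inner_smul_left, inner_sub_right,
      inner_sub_right, real_inner_self_eq_norm_sq, real_inner_self_eq_norm_sq,
      real_inner_comm x y]
    ring
  have hsign : 0 ≤ (a ^ A - b ^ A) * (‖x‖^2 - ‖y‖^2) := by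
    rcases le_total ‖x‖ ‖y‖ with h | h
    · have hab : a ≤ b := by simp [ha, hb]; linarith
      have : a ^ A ≤ b ^ A := Real.rpow_le_rpow (by linarith) hab hA
      have h2 : ‖x‖^2 ≤ ‖y‖^2 := by nlinarith
      nlinarith [mul_nonneg (sub_nonneg.2 this) (sub_nonneg.2 h2)]
    · have hab : b ≤ a := by simp [ha, hb]; linarith
      have : b ^ A ≤ a ^ A := Real.rpow_le_rpow (by linarith) hab hA
      exact mul_nonneg (by linarith) (by nlinarith)
  have hsq : ‖x - y‖^2 = ‖x‖^2 - 2 * ⟪x, y⟫ + ‖y‖^2 := norm_sub_sq_real x y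
  have hCS : ⟪a ^ A • x - b ^ A • y, x - y⟫ ≤ ‖a ^ A • x - b ^ A • y‖ * ‖x - y‖ :=
    real_inner_le_norm _ _
  have key : (a ^ A + b ^ A) / 2 * ‖x - y‖ ≤ ‖a ^ A • x - b ^ A • y‖ := by
    rcases eq_or_lt_of_le (norm_nonneg (x - y)) with h0 | h0
    · rw [← h0]; simpa using norm_nonneg (a ^ A • x - b ^ A • y)
    · nlinarith [hCS, hinner, hsign, hsq]
  have hkl : ‖x - y‖ ≤ 2 * C := by nlinarith [key, hd, haA, hbA]
  -- comparability
  have hnxy : ‖x‖ - ‖y‖ ≤ ‖x - y‖ := norm_sub_norm_le x y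
  have habc : a ≤ (1 + 2*C) * b := by
    have : a ≤ b + 2*C := by rw [ha, hb]; have h1 := hnxy; have h2 := hkl; linarith
    nlinarith
  have haAb : a ^ A ≤ (1 + 2*C) ^ A * b ^ A := by
    calc a ^ A ≤ ((1 + 2*C) * b) ^ A :=
          Real.rpow_le_rpow (by linarith) habc hA
      _ = (1 + 2*C) ^ A * b ^ A := Real.mul_rpow (by linarith) (by linarith)
  constructor
  · nlinarith
  · intro ξ hξ
    rw [Metric.mem_closedBall, dist_eq_norm] at hξ
    simp only [Set.mem_setOf_eq]
    calc ‖ξ - b ^ A • y‖ = dist ξ (b ^ A • y) := (dist_eq_norm _ _).symm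
      _ ≤ dist ξ (a ^ A • x) + dist (a ^ A • x) (b ^ A • y) := dist_triangle _ _ _
      _ = ‖ξ - a ^ A • x‖ + ‖a ^ A • x - b ^ A • y‖ := by rw [dist_eq_norm, dist_eq_norm]
      _ ≤ C * a ^ A + (C * a ^ A + C * b ^ A) := add_le_add hξ hd
      _ ≤ 3*C*(1+2*C)^A * b ^ A := by
          have e1 : C * a ^ A ≤ C * ((1+2*C)^A * b ^ A) :=
            mul_le_mul_of_nonneg_left haAb hC.le
          have e2 : C * b ^ A ≤ C * ((1+2*C)^A * b ^ A) :=
            mul_le_mul_of_nonneg_left (le_mul_of_one_le_left hbA.le h1le) hC.le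
          nlinarith [e1, e2]
end
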